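/- Chen's identity at level two: for a C¹ path x : [a,c] → ℝ^d and a < b < c, the second-level signature over [a,c] satisfies S^{(i,j)}_{[a,c]} = S^{(i,j)}_{[a,b]} + S^{(i,j)}_{[b,c]} + S^{(i)}_{[a,b]} · S^{(j)}_{[b,c]}. -/
import Mathlib


/-- Chen's identity at level two: for `a < b < c`,
`S^{(i,j)}_{[a,c]} = S^{(i,j)}_{[a,b]} + S^{(i,j)}_{[b,c]} + S^{(i)}_{[a,b]} · S^{(j)}_{[b,c]}`. -/
theorem chen_identity_level_two
    {d : ℕ} (a b c : ℝ) (hab : a < b) (hbc : b < c) (x x' : ℝ → Fin d → ℝ)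
    (hderiv : ∀ t ∈ Set.Icc a c, ∀ i, HasDerivAt (fun s => x s i) (x' t i) t)
    (hcont : ContinuousOn x' (Set.Icc a c)) (i j : Fin d) :
    (∫ t2 in a..c, ∫ t1 in a..t2, x' t1 i * x' t2 j) =
      (∫ t2 in a..b, ∫ t1 in a..t2, x' t1 i * x' t2 j) +
      (∫ t2 in b..c, ∫ t1 in b..t2, x' t1 i * x' t2 j) +
      (∫ t in a..b, x' t i) * (∫ t in b..c, x' t j) := by
  have hac : a ≤ c := le_of_lt (hab.trans hbc)
  have hsubbc : Set.Icc b c ⊆ Set.Icc a c := Set.Icc_subset_Icc hab.le le_rfl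
  have hci : ContinuousOn (fun t => x' t i) (Set.Icc a c) :=
    (continuous_apply i).comp_continuousOn hcont
  have hcj : ContinuousOn (fun t => x' t j) (Set.Icc a c) :=
    (continuous_apply j).comp_continuousOn hcont
  have hIi : ∀ s t : ℝ, s ∈ Set.Icc a c → t ∈ Set.Icc a c →
      IntervalIntegrable (fun u => x' u i) MeasureTheory.volume s t := fun s t hs ht =>
    (hci.mono (Set.uIcc_subset_Icc hs ht)).intervalIntegrable
  have hIj : ∀ s t : ℝ, s ∈ Set.Icc a c → t ∈ Set.Icc a c →
      IntervalIntegrable (fun u => x' u j) MeasureTheory.volume s t := fun s t hs ht =>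
    (hcj.mono (Set.uIcc_subset_Icc hs ht)).intervalIntegrable
  have hamem : a ∈ Set.Icc a c := Set.left_mem_Icc.2 hac
  have hbmem : b ∈ Set.Icc a c := ⟨hab.le, hbc.le⟩
  have hcmem : c ∈ Set.Icc a c := Set.right_mem_Icc.2 hac
  set g : ℝ → ℝ := fun t => ∫ u in a..t, x' u i with hg
  have hgcont : ContinuousOn g (Set.Icc a c) := by
    have hint : MeasureTheory.IntegrableOn (fun u => x' u i) (Set.uIcc a c)
        MeasureTheory.volume := by
      rw [Set.uIcc_of_le hac]
      exact hci.integrableOn_compact isCompact_Icc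
    have := intervalIntegral.continuousOn_primitive_interval hint
    rwa [Set.uIcc_of_le hac] at this
  have key : ∀ s t2 : ℝ, (∫ t1 in s..t2, x' t1 i * x' t2 j)
      = (∫ t1 in s..t2, x' t1 i) * x' t2 j := fun s t2 =>
    intervalIntegral.integral_mul_const _ _
  have hF : ∀ t2, (∫ t1 in a..t2, x' t1 i * x' t2 j) = g t2 * x' t2 j := fun t2 => key a t2
  have hFcont : ContinuousOn (fun t2 => g t2 * x' t2 j) (Set.Icc a c) := hgcont.mul hcj
  have hFint : ∀ s t : ℝ, s ∈ Set.Icc a c → t ∈ Set.Icc a c →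
      IntervalIntegrable (fun t2 => g t2 * x' t2 j) MeasureTheory.volume s t :=
    fun s t hs ht => (hFcont.mono (Set.uIcc_subset_Icc hs ht)).intervalIntegrable
  have hsplit : (∫ t2 in a..c, g t2 * x' t2 j)
      = (∫ t2 in a..b, g t2 * x' t2 j) + (∫ t2 in b..c, g t2 * x' t2 j) :=
    (intervalIntegral.integral_add_adjacent_intervals (hFint a b hamem hbmem)
      (hFint b c hbmem hcmem)).symm
  have hgdecomp : ∀ t2 ∈ Set.Icc a c, g t2 = g b + ∫ u in b..t2, x' u i := by
    intro t2 ht2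
    exact (intervalIntegral.integral_add_adjacent_intervals (hIi a b hamem hbmem)
      (hIi b t2 hbmem ht2)).symm
  -- continuity/integrability of the primitive based at b
  have hg2 : ContinuousOn (fun t2 => ∫ u in b..t2, x' u i) (Set.Icc b c) := by
    have hint : MeasureTheory.IntegrableOn (fun u => x' u i) (Set.uIcc b c)
        MeasureTheory.volume := by
      rw [Set.uIcc_of_le hbc.le]
      exact (hci.mono hsubbc).integrableOn_compact isCompact_Icc
    have := intervalIntegral.continuousOn_primitive_interval hint
    rwa [Set.uIcc_of_le hbc.le] at this
  have hInt1 : IntervalIntegrable (fun t2 => (∫ u in b..t2, x' u i) * x' t2 j)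
      MeasureTheory.volume b c := by
    have : ContinuousOn (fun t2 => (∫ u in b..t2, x' u i) * x' t2 j) (Set.Icc b c) :=
      hg2.mul (hcj.mono hsubbc)
    exact (this.mono (by rw [Set.uIcc_of_le hbc.le])).intervalIntegrable
  have hInt2 : IntervalIntegrable (fun t2 => g b * x' t2 j) MeasureTheory.volume b c :=
    (hIj b c hbmem hcmem).const_mul _
  have hbc' : (∫ t2 in b..c, g t2 * x' t2 j)
      = (∫ t2 in b..c, ∫ t1 in b..t2, x' t1 i * x' t2 j) + g b * ∫ t in b..c, x' t j := by
    have h1 : (∫ t2 in b..c, g t2 * x' t2 j)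
        = ∫ t2 in b..c, ((∫ u in b..t2, x' u i) * x' t2 j + g b * x' t2 j) := by
      apply intervalIntegral.integral_congr
      intro t2 ht2
      rw [Set.uIcc_of_le hbc.le] at ht2
      have ht2' : t2 ∈ Set.Icc a c := hsubbc ht2
      show g t2 * x' t2 j = (∫ u in b..t2, x' u i) * x' t2 j + g b * x' t2 j
      rw [hgdecomp t2 ht2']
      ring
    rw [h1, intervalIntegral.integral_add hInt1 hInt2,
      intervalIntegral.integral_const_mul]
    congr 1
    apply intervalIntegral.integral_congr
    intro t2 _
    exact (key b t2).symm
  calc (∫ t2 in a..c, ∫ t1 in a..t2, x' t1 i * x' t2 j)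
      = ∫ t2 in a..c, g t2 * x' t2 j := by
        apply intervalIntegral.integral_congr; intro t2 _; exact hF t2
    _ = (∫ t2 in a..b, g t2 * x' t2 j) + (∫ t2 in b..c, g t2 * x' t2 j) := hsplit
    _ = (∫ t2 in a..b, ∫ t1 in a..t2, x' t1 i * x' t2 j) +
        ((∫ t2 in b..c, ∫ t1 in b..t2, x' t1 i * x' t2 j) + g b * ∫ t in b..c, x' t j) := by
        rw [hbc']
        congr 1
        apply intervalIntegral.integral_congr; intro t2 _; exact (hF t2).symm
    _ = _ := by simp only [hg]; ring
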